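/- Let G be a finite group, ρ a set of primes, X = E_ρ(G), and suppose C is a big connected component of the commuting graph Γ_X. If C contains an element x of prime order r, then C contains every element of G of order r. -/

import Mathlib

open SimpleGraph

/-- The commuting graph on a subset `X` of a group `G`: vertices are the elements of `X`,
and two distinct vertices are adjacent iff they commute. -/
def commGraph {G : Type*} [Group G] (X : Set G) : SimpleGraph X where
  Adj a b := a ≠ b ∧ (a : G) * (b : G) = (b : G) * (a : G)
  symm := ⟨fun a b h => ⟨h.1.symm, h.2.symm⟩⟩
  loopless := ⟨fun a h => h.1 rfl⟩

/-- The connected component of `x` in the commuting graph on `X`, viewed as a subset of `G`. -/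
def compSet {G : Type*} [Group G] (X : Set G) (x : G) (hx : x ∈ X) : Set G :=
  {y : G | ∃ hy : y ∈ X, (commGraph X).Reachable ⟨x, hx⟩ ⟨y, hy⟩}

/-- The stabilizer `H_x` in `G` of the connected component of `x` in the commuting graph on `X`,
under the conjugation action. -/
def conjStab {G : Type*} [Group G] (X : Set G) (x : G) (hx : x ∈ X) : Set G :=
  {g : G | (fun y => g⁻¹ * y * g) '' compSet X x hx = compSet X x hx}

/-- The set `E_ρ(G)` of elements of `G` whose order is a prime belonging to `ρ`. -/
def primeOrderElts (G : Type*) [Group G] (ρ : Set ℕ) : Set G :=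
  {z : G | orderOf z ∈ ρ}

/-- Let `ρ` be a set of primes and `X = E_ρ(G)`. If a big connected component `C` of the
commuting graph on `X` contains an element `x` of prime order `r`, then `C` contains every
element of `G` of order `r`. Here `C` is realized as the connected component of `x`, and
bigness means invariance under the conjugation action of `G`. -/
lemma reach_of_comm {G : Type*} [Group G] {X : Set G} {a b : G} (ha : a ∈ X) (hb : b ∈ X)
    (h : a * b = b * a) : (commGraph X).Reachable ⟨a, ha⟩ ⟨b, hb⟩ := by
  by_cases hab : (⟨a, ha⟩ : X) = ⟨b, hb⟩
  · rw [hab]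
  · exact SimpleGraph.Adj.reachable (And.intro hab h)

theorem mem_bigComponent_of_orderOf_eq
    {G : Type*} [Group G] [Finite G] (ρ : Set ℕ) (hρ : ∀ p ∈ ρ, p.Prime)
    (x : G) (hx : x ∈ primeOrderElts G ρ)
    (hbig : ∀ g : G,
      (fun y => g⁻¹ * y * g) '' compSet (primeOrderElts G ρ) x hx
        = compSet (primeOrderElts G ρ) x hx)
    (r : ℕ) (hr : r.Prime) (hxr : orderOf x = r) :
    ∀ z : G, orderOf z = r → z ∈ compSet (primeOrderElts G ρ) x hx := by
  intro z hz
  haveI : Fact r.Prime := ⟨hr⟩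
  have hrρ : r ∈ ρ := hxr ▸ hx
  have hpx : IsPGroup r (Subgroup.zpowers x) :=
    IsPGroup.of_card (by rw [Nat.card_zpowers, hxr, pow_one])
  obtain ⟨Q, hQ⟩ := hpx.exists_le_sylow
  have hpz : IsPGroup r (Subgroup.zpowers z) :=
    IsPGroup.of_card (by rw [Nat.card_zpowers, hz, pow_one])
  obtain ⟨P, hP⟩ := hpz.exists_le_sylow
  obtain ⟨g, hg⟩ := MulAction.exists_smul_eq G Q P
  set x' := g * x * g⁻¹ with hx'def
  have hx'P : x' ∈ (P : Subgroup G) := by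
    rw [← hg]
    exact Subgroup.smul_mem_pointwise_smul x (MulAut.conj g) _ (hQ (Subgroup.mem_zpowers x))
  have hx'r : orderOf x' = r := by
    rw [hx'def, ← hxr]
    exact orderOf_injective (MulAut.conj g).toMonoidHom (MulAut.conj g).injective x
  -- x' is in the component
  have hx'C : x' ∈ compSet (primeOrderElts G ρ) x hx := by
    rw [← hbig g⁻¹]
    exact ⟨x, ⟨hx, Reachable.refl _⟩, by simp only [inv_inv, hx'def]⟩
  -- P is nontrivial
  haveI : Nontrivial (P : Subgroup G) := by
    refine ⟨⟨⟨x', hx'P⟩, 1, ?_⟩⟩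
    intro h
    have : x' = 1 := by simpa using congrArg Subtype.val h
    rw [this, orderOf_one] at hx'r
    exact hr.one_lt.ne' hx'r.symm
  -- center of P is nontrivial p-group, apply Cauchy
  haveI := P.2.center_nontrivial
  have hcpg : IsPGroup r (Subgroup.center (P : Subgroup G)) := P.2.to_subgroup _
  haveI := Fintype.ofFinite (Subgroup.center (P : Subgroup G))
  obtain ⟨n, hn⟩ := (IsPGroup.iff_card).mp hcpg
  have hn0 : n ≠ 0 := by
    rintro rfl
    rw [pow_zero] at hn
    exact (not_subsingleton (Subgroup.center (P : Subgroup G))) (Nat.card_eq_one_iff_unique.mp hn).1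
  have hdvd : r ∣ Fintype.card (Subgroup.center (P : Subgroup G)) := by
    rw [← Nat.card_eq_fintype_card, hn]
    exact dvd_pow_self r hn0
  obtain ⟨c0, hc0⟩ := exists_prime_orderOf_dvd_card r hdvd
  set c : G := ((c0 : (P : Subgroup G)) : G) with hcdef
  have hcr : orderOf c = r := by
    have h1 : orderOf ((c0 : (P : Subgroup G)) : G) = orderOf (c0 : (P : Subgroup G)) :=
      orderOf_injective (P : Subgroup G).subtype (Subgroup.subtype_injective _) _
    have h2 : orderOf (c0 : (P : Subgroup G)) = orderOf c0 :=
      orderOf_injective (Subgroup.center _).subtype (Subgroup.subtype_injective _) c0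
    rw [hcdef, h1, h2, hc0]
  have hccomm : ∀ y ∈ (P : Subgroup G), y * c = c * y := by
    intro y hy
    have := (Subgroup.mem_center_iff.mp c0.2) ⟨y, hy⟩
    exact congrArg Subtype.val this
  -- memberships in X
  have hx'X : x' ∈ primeOrderElts G ρ := by rw [primeOrderElts, Set.mem_setOf_eq, hx'r]; exact hrρ
  have hcX : c ∈ primeOrderElts G ρ := by rw [primeOrderElts, Set.mem_setOf_eq, hcr]; exact hrρ
  have hzX : z ∈ primeOrderElts G ρ := by rw [primeOrderElts, Set.mem_setOf_eq, hz]; exact hrρ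
  obtain ⟨hx'X', hreach⟩ := hx'C
  refine ⟨hzX, hreach.trans (?_ : (commGraph _).Reachable ⟨x', hx'X'⟩ ⟨z, hzX⟩)⟩
  refine (reach_of_comm hx'X' hcX (hccomm x' hx'P)).trans
    (reach_of_comm hcX hzX ((hccomm z (hP (Subgroup.mem_zpowers z))).symm))
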